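/- With the quaternion parametrization of words W_{I_m}(α,β,γ) (axis of A along Ox, axis of B in the xy-plane at angle γ), for every multi-index I_m with |I_m| = n there exists a polynomial P with integer coefficients in six variables, of total degree at most 2n + 2m, such that ‖∂_α W_{I_m}(α,β,γ)‖² = P(cos α, sin α, cos β, sin β, cos γ, sin γ) for all (α,β,γ). -/

import Mathlib

open Quaternion

/-- The quaternion `cos(sα) + i sin(sα)` representing `A^s`, where `A` is rotation by angle
`2α` about the `Ox`-axis. -/
noncomputable def qA (s : ℤ) (α : ℝ) : ℍ[ℝ] :=
  ⟨Real.cos (s * α), Real.sin (s * α), 0, 0⟩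

/-- The quaternion `cos(rβ) + sin(rβ)(i cos γ + j sin γ)` representing `B^r`, where `B` is
rotation by angle `2β` about the axis in the `xy`-plane at angle `γ` to `Ox`. -/
noncomputable def qB (r : ℤ) (β γ : ℝ) : ℍ[ℝ] :=
  ⟨Real.cos (r * β), Real.sin (r * β) * Real.cos γ, Real.sin (r * β) * Real.sin γ, 0⟩

/-- The quaternion-valued word `W_{I_m}(α,β,γ)` for the multi-index
`I_m = ((s_1,r_1),…,(s_m,r_m))`. -/
noncomputable def qWord (l : List (ℤ × ℤ)) (α β γ : ℝ) : ℍ[ℝ] :=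
  (l.map fun p => qA p.1 α * qB p.2 β γ).prod

/-- `|I_m| = Σ_p (|s_p| + |r_p|)`. -/
def wordLen (l : List (ℤ × ℤ)) : ℕ := (l.map fun p => p.1.natAbs + p.2.natAbs).sum

noncomputable def trigVec (α β γ : ℝ) : Fin 6 → ℝ :=
  ![Real.cos α, Real.sin α, Real.cos β, Real.sin β, Real.cos γ, Real.sin γ]

/-- `f` is an integer polynomial of total degree `≤ d` in the six trig variables. -/
def IsTrig (d : ℕ) (f : ℝ → ℝ → ℝ → ℝ) : Prop :=
  ∃ P : MvPolynomial (Fin 6) ℤ, P.totalDegree ≤ d ∧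
    ∀ α β γ, f α β γ = MvPolynomial.aeval (trigVec α β γ) P

namespace IsTrig

theorem mono {d d' : ℕ} {f} (h : IsTrig d f) (hd : d ≤ d') : IsTrig d' f := by
  obtain ⟨P, hP, he⟩ := h; exact ⟨P, hP.trans hd, he⟩

theorem const (d : ℕ) (n : ℤ) : IsTrig d (fun _ _ _ => (n : ℝ)) := by
  refine ⟨MvPolynomial.C n, ?_, ?_⟩
  · rw [MvPolynomial.totalDegree_C]; exact Nat.zero_le d
  · simp

theorem zero (d : ℕ) : IsTrig d (fun _ _ _ => 0) := by
  simpa using const d 0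

theorem one (d : ℕ) : IsTrig d (fun _ _ _ => 1) := by
  simpa using const d 1

theorem add {d : ℕ} {f g} (hf : IsTrig d f) (hg : IsTrig d g) :
    IsTrig d (fun a b c => f a b c + g a b c) := by
  obtain ⟨P, hP, heP⟩ := hf; obtain ⟨Q, hQ, heQ⟩ := hg
  refine ⟨P + Q, (MvPolynomial.totalDegree_add P Q).trans (max_le hP hQ), ?_⟩
  simp [heP, heQ]

theorem neg {d : ℕ} {f} (hf : IsTrig d f) : IsTrig d (fun a b c => -(f a b c)) := by
  obtain ⟨P, hP, heP⟩ := hf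
  refine ⟨-P, by simpa [MvPolynomial.totalDegree_neg] using hP, ?_⟩
  simp [heP]

theorem sub {d : ℕ} {f g} (hf : IsTrig d f) (hg : IsTrig d g) :
    IsTrig d (fun a b c => f a b c - g a b c) := by
  simpa [sub_eq_add_neg] using hf.add hg.neg

theorem mul {d e : ℕ} {f g} (hf : IsTrig d f) (hg : IsTrig e g) :
    IsTrig (d + e) (fun a b c => f a b c * g a b c) := by
  obtain ⟨P, hP, heP⟩ := hf; obtain ⟨Q, hQ, heQ⟩ := hg
  refine ⟨P * Q, (MvPolynomial.totalDegree_mul P Q).trans (add_le_add hP hQ), ?_⟩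
  simp [heP, heQ]

theorem intMul {d : ℕ} {f} (n : ℤ) (hf : IsTrig d f) :
    IsTrig d (fun a b c => (n : ℝ) * f a b c) := by
  simpa using (const 0 n).mul hf

theorem var (i : Fin 6) : IsTrig 1 (fun a b c => trigVec a b c i) := by
  refine ⟨MvPolynomial.X i, ?_, ?_⟩
  · rw [MvPolynomial.totalDegree_X]
  · simp

theorem cosα : IsTrig 1 (fun a _ _ => Real.cos a) := var 0
theorem sinα : IsTrig 1 (fun a _ _ => Real.sin a) := var 1
theorem cosβ : IsTrig 1 (fun _ b _ => Real.cos b) := var 2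
theorem sinβ : IsTrig 1 (fun _ b _ => Real.sin b) := var 3
theorem cosγ : IsTrig 1 (fun _ _ c => Real.cos c) := var 4
theorem sinγ : IsTrig 1 (fun _ _ c => Real.sin c) := var 5

theorem natCosSin {x : ℝ → ℝ → ℝ → ℝ}
    (hc : IsTrig 1 (fun a b c => Real.cos (x a b c)))
    (hs : IsTrig 1 (fun a b c => Real.sin (x a b c))) :
    ∀ n : ℕ, IsTrig n (fun a b c => Real.cos (n * x a b c)) ∧
      IsTrig n (fun a b c => Real.sin (n * x a b c)) := by
  intro n
  induction n with
  | zero =>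
    constructor
    · simp only [Nat.cast_zero, zero_mul, Real.cos_zero]
      exact one 0
    · simp only [Nat.cast_zero, zero_mul, Real.sin_zero]
      exact zero 0
  | succ n ih =>
    have hcos : ∀ a b c : ℝ, Real.cos ((n + 1 : ℕ) * x a b c) =
        Real.cos (n * x a b c) * Real.cos (x a b c) -
          Real.sin (n * x a b c) * Real.sin (x a b c) := by
      intro a b c
      rw [← Real.cos_add]
      congr 1
      push_cast; ring
    have hsin : ∀ a b c : ℝ, Real.sin ((n + 1 : ℕ) * x a b c) =
        Real.sin (n * x a b c) * Real.cos (x a b c) +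
          Real.cos (n * x a b c) * Real.sin (x a b c) := by
      intro a b c
      rw [← Real.sin_add]
      congr 1
      push_cast; ring
    constructor
    · simp only [hcos]; exact (ih.1.mul hc).sub (ih.2.mul hs)
    · simp only [hsin]; exact (ih.2.mul hc).add (ih.1.mul hs)

theorem intCos {x : ℝ → ℝ → ℝ → ℝ}
    (hc : IsTrig 1 (fun a b c => Real.cos (x a b c)))
    (hs : IsTrig 1 (fun a b c => Real.sin (x a b c))) (s : ℤ) :
    IsTrig s.natAbs (fun a b c => Real.cos (s * x a b c)) := by
  have key : ∀ t : ℝ, Real.cos ((s : ℝ) * t) = Real.cos ((s.natAbs : ℝ) * t) := by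
    intro t
    rcases Int.natAbs_eq s with h | h
    · have h' : (s : ℝ) = (s.natAbs : ℝ) := by simpa only [Int.cast_natCast, Int.cast_neg] using congrArg (fun z : ℤ => (z : ℝ)) h
      rw [h']
    · have h' : (s : ℝ) = -(s.natAbs : ℝ) := by simpa only [Int.cast_natCast, Int.cast_neg] using congrArg (fun z : ℤ => (z : ℝ)) h
      rw [h', neg_mul, Real.cos_neg]
  simp only [key]
  exact (natCosSin hc hs s.natAbs).1

theorem intSin {x : ℝ → ℝ → ℝ → ℝ}
    (hc : IsTrig 1 (fun a b c => Real.cos (x a b c)))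
    (hs : IsTrig 1 (fun a b c => Real.sin (x a b c))) (s : ℤ) :
    IsTrig s.natAbs (fun a b c => Real.sin (s * x a b c)) := by
  rcases Int.natAbs_eq s with h | h
  · have key : ∀ t : ℝ, Real.sin ((s : ℝ) * t) = Real.sin ((s.natAbs : ℝ) * t) := by
      intro t
      have h' : (s : ℝ) = (s.natAbs : ℝ) := by simpa only [Int.cast_natCast, Int.cast_neg] using congrArg (fun z : ℤ => (z : ℝ)) h
      rw [h']
    simp only [key]
    exact (natCosSin hc hs s.natAbs).2
  · have key : ∀ t : ℝ, Real.sin ((s : ℝ) * t) = -Real.sin ((s.natAbs : ℝ) * t) := by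
      intro t
      have h' : (s : ℝ) = -(s.natAbs : ℝ) := by simpa only [Int.cast_natCast, Int.cast_neg] using congrArg (fun z : ℤ => (z : ℝ)) h
      rw [h', neg_mul, Real.sin_neg]
    simp only [key]
    exact ((natCosSin hc hs s.natAbs).2).neg

theorem cosIntα (s : ℤ) : IsTrig s.natAbs (fun a _ _ => Real.cos (s * a)) :=
  intCos cosα sinα s

theorem sinIntα (s : ℤ) : IsTrig s.natAbs (fun a _ _ => Real.sin (s * a)) :=
  intSin cosα sinα s

theorem cosIntβ (s : ℤ) : IsTrig s.natAbs (fun _ b _ => Real.cos (s * b)) :=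
  intCos cosβ sinβ s

theorem sinIntβ (s : ℤ) : IsTrig s.natAbs (fun _ b _ => Real.sin (s * b)) :=
  intSin cosβ sinβ s

end IsTrig

/-- A quaternion-valued function all of whose components are trig polynomials of degree `≤ d`. -/
def QTrig (d : ℕ) (f : ℝ → ℝ → ℝ → ℍ[ℝ]) : Prop :=
  IsTrig d (fun a b c => (f a b c).re) ∧ IsTrig d (fun a b c => (f a b c).imI) ∧
    IsTrig d (fun a b c => (f a b c).imJ) ∧ IsTrig d (fun a b c => (f a b c).imK)

namespace QTrig

theorem mul {d e : ℕ} {f g} (hf : QTrig d f) (hg : QTrig e g) :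
    QTrig (d + e) (fun a b c => f a b c * g a b c) := by
  obtain ⟨f0, f1, f2, f3⟩ := hf
  obtain ⟨g0, g1, g2, g3⟩ := hg
  refine ⟨?_, ?_, ?_, ?_⟩ <;> simp only [Quaternion.re_mul, Quaternion.imI_mul,
    Quaternion.imJ_mul, Quaternion.imK_mul]
  · exact (((f0.mul g0).sub (f1.mul g1)).sub (f2.mul g2)).sub (f3.mul g3)
  · exact (((f0.mul g1).add (f1.mul g0)).add (f2.mul g3)).sub (f3.mul g2)
  · exact (((f0.mul g2).sub (f1.mul g3)).add (f2.mul g0)).add (f3.mul g1)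
  · exact (((f0.mul g3).add (f1.mul g2)).sub (f2.mul g1)).add (f3.mul g0)

theorem add {d : ℕ} {f g} (hf : QTrig d f) (hg : QTrig d g) :
    QTrig d (fun a b c => f a b c + g a b c) := by
  obtain ⟨f0, f1, f2, f3⟩ := hf
  obtain ⟨g0, g1, g2, g3⟩ := hg
  exact ⟨by simpa using f0.add g0, by simpa using f1.add g1,
    by simpa using f2.add g2, by simpa using f3.add g3⟩

theorem one : QTrig 0 (fun _ _ _ => (1 : ℍ[ℝ])) := by
  refine ⟨?_, ?_, ?_, ?_⟩ <;> simp only [Quaternion.re_one, Quaternion.imI_one,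
    Quaternion.imJ_one, Quaternion.imK_one]
  · exact IsTrig.one 0
  all_goals exact IsTrig.zero 0

theorem zero : QTrig 0 (fun _ _ _ => (0 : ℍ[ℝ])) := by
  refine ⟨?_, ?_, ?_, ?_⟩ <;> simp only [Quaternion.re_zero, Quaternion.imI_zero,
    Quaternion.imJ_zero, Quaternion.imK_zero] <;> exact IsTrig.zero 0

end QTrig

theorem qTrig_qA (s : ℤ) : QTrig s.natAbs (fun a _ _ => qA s a) := by
  refine ⟨?_, ?_, ?_, ?_⟩ <;> simp only [qA]
  · exact IsTrig.cosIntα s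
  · exact IsTrig.sinIntα s
  all_goals exact IsTrig.zero _

theorem qTrig_qB (r : ℤ) : QTrig (r.natAbs + 1) (fun _ b c => qB r b c) := by
  refine ⟨?_, ?_, ?_, ?_⟩ <;> simp only [qB]
  · exact (IsTrig.cosIntβ r).mono (by omega)
  · exact (IsTrig.sinIntβ r).mul IsTrig.cosγ
  · exact (IsTrig.sinIntβ r).mul IsTrig.sinγ
  · exact IsTrig.zero _

/-- The imaginary unit `i`. -/
def qi : ℍ[ℝ] := ⟨0, 1, 0, 0⟩

/-- The `α`-derivative of `qA s`. -/
noncomputable def qA' (s : ℤ) (α : ℝ) : ℍ[ℝ] :=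
  ⟨-((s : ℝ) * Real.sin (s * α)), (s : ℝ) * Real.cos (s * α), 0, 0⟩

theorem qTrig_qA' (s : ℤ) : QTrig s.natAbs (fun a _ _ => qA' s a) := by
  refine ⟨?_, ?_, ?_, ?_⟩ <;> simp only [qA']
  · have h := (IsTrig.sinIntα s).intMul (-s)
    have he : ∀ a : ℝ, ((-s : ℤ) : ℝ) * Real.sin (s * a) = -((s : ℝ) * Real.sin (s * a)) := by
      intro a; push_cast; ring
    simp only [he] at h
    exact h
  · exact (IsTrig.cosIntα s).intMul s
  all_goals exact IsTrig.zero _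

theorem hasDerivAt_qA (s : ℤ) (α : ℝ) : HasDerivAt (fun a => qA s a) (qA' s α) α := by
  have hsa : HasDerivAt (fun a : ℝ => (s : ℝ) * a) (s : ℝ) α := by
    simpa using (hasDerivAt_id α).const_mul (s : ℝ)
  have hcos : HasDerivAt (fun a : ℝ => Real.cos ((s : ℝ) * a))
      (-Real.sin ((s : ℝ) * α) * (s : ℝ)) α := (Real.hasDerivAt_cos _).comp α hsa
  have hsin : HasDerivAt (fun a : ℝ => Real.sin ((s : ℝ) * a))
      (Real.cos ((s : ℝ) * α) * (s : ℝ)) α := (Real.hasDerivAt_sin _).comp α hsa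
  have key : (fun a => qA s a) =
      fun a => Real.cos ((s : ℝ) * a) • (1 : ℍ[ℝ]) + Real.sin ((s : ℝ) * a) • qi := by
    funext a; ext <;> simp [qA, Quaternion.re_smul] <;> simp [qi]
  have h := (hcos.smul_const (1 : ℍ[ℝ])).add (hsin.smul_const qi)
  rw [key]
  refine h.congr_deriv ?_
  ext <;> simp [qA', Quaternion.re_smul] <;> simp [qi] <;> ring

/-- Formula for the `α`-derivative of the word. -/
noncomputable def qD : List (ℤ × ℤ) → ℝ → ℝ → ℝ → ℍ[ℝ]
  | [], _, _, _ => 0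
  | p :: l, α, β, γ =>
      qA' p.1 α * qB p.2 β γ * qWord l α β γ + qA p.1 α * qB p.2 β γ * qD l α β γ

theorem qWord_cons (p : ℤ × ℤ) (l : List (ℤ × ℤ)) (α β γ : ℝ) :
    qWord (p :: l) α β γ = qA p.1 α * qB p.2 β γ * qWord l α β γ := by
  simp [qWord]

theorem wordLen_cons (p : ℤ × ℤ) (l : List (ℤ × ℤ)) :
    wordLen (p :: l) = p.1.natAbs + p.2.natAbs + wordLen l := by
  simp [wordLen]

theorem hasDerivAt_qWord (l : List (ℤ × ℤ)) (β γ α : ℝ) :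
    HasDerivAt (fun a => qWord l a β γ) (qD l α β γ) α := by
  induction l with
  | nil => simpa [qWord, qD] using hasDerivAt_const α (1 : ℍ[ℝ])
  | cons p l ih =>
    have h1 : HasDerivAt (fun a => qA p.1 a * qB p.2 β γ) (qA' p.1 α * qB p.2 β γ) α :=
      (hasDerivAt_qA p.1 α).mul_const _
    have h := h1.mul ih
    simp only [qWord_cons, qD]
    exact h

theorem qTrig_qWord (l : List (ℤ × ℤ)) :
    QTrig (wordLen l + l.length) (fun a b c => qWord l a b c) := by
  induction l with
  | nil => simpa [qWord, wordLen] using QTrig.one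
  | cons p l ih =>
    have hd : wordLen (p :: l) + (p :: l).length =
        (p.1.natAbs + (p.2.natAbs + 1)) + (wordLen l + l.length) := by
      rw [wordLen_cons, List.length_cons]; ring
    have h := ((qTrig_qA p.1).mul (qTrig_qB p.2)).mul ih
    simp only [qWord_cons]
    rw [hd]
    exact h

theorem qTrig_qD (l : List (ℤ × ℤ)) :
    QTrig (wordLen l + l.length) (fun a b c => qD l a b c) := by
  induction l with
  | nil => simpa [qD, wordLen] using QTrig.zero
  | cons p l ih =>
    have hd : wordLen (p :: l) + (p :: l).length =
        (p.1.natAbs + (p.2.natAbs + 1)) + (wordLen l + l.length) := by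
      rw [wordLen_cons, List.length_cons]; ring
    have h1 := ((qTrig_qA' p.1).mul (qTrig_qB p.2)).mul (qTrig_qWord l)
    have h2 := ((qTrig_qA p.1).mul (qTrig_qB p.2)).mul ih
    have h := h1.add h2
    simp only [qD]
    rw [hd]
    exact h

/-- For every multi-index `I_m` with `|I_m| = n` and `m` letters, there is an integer
polynomial `P` in six variables of total degree at most `2n + 2m` with
`‖∂_α W_{I_m}(α,β,γ)‖² = P(cos α, sin α, cos β, sin β, cos γ, sin γ)` for all `(α,β,γ)`. -/
theorem stmt_6 (l : List (ℤ × ℤ)) (hnz : ∀ q ∈ l, q.1 ≠ 0 ∧ q.2 ≠ 0) :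
    ∃ P : MvPolynomial (Fin 6) ℤ,
      P.totalDegree ≤ 2 * wordLen l + 2 * l.length ∧
      ∀ α β γ : ℝ,
        ‖deriv (fun a => qWord l a β γ) α‖ ^ 2 =
          MvPolynomial.aeval
            ![Real.cos α, Real.sin α, Real.cos β, Real.sin β, Real.cos γ, Real.sin γ] P := by
  obtain ⟨⟨P0, h0, e0⟩, ⟨P1, h1, e1⟩, ⟨P2, h2, e2⟩, ⟨P3, h3, e3⟩⟩ := qTrig_qD l
  have e0' : ∀ α β γ : ℝ, (qD l α β γ).re = MvPolynomial.aeval (trigVec α β γ) P0 := e0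
  have e1' : ∀ α β γ : ℝ, (qD l α β γ).imI = MvPolynomial.aeval (trigVec α β γ) P1 := e1
  have e2' : ∀ α β γ : ℝ, (qD l α β γ).imJ = MvPolynomial.aeval (trigVec α β γ) P2 := e2
  have e3' : ∀ α β γ : ℝ, (qD l α β γ).imK = MvPolynomial.aeval (trigVec α β γ) P3 := e3
  refine ⟨P0 ^ 2 + P1 ^ 2 + P2 ^ 2 + P3 ^ 2, ?_, ?_⟩
  · have hsq : ∀ Q : MvPolynomial (Fin 6) ℤ, Q.totalDegree ≤ wordLen l + l.length →
        (Q ^ 2).totalDegree ≤ 2 * wordLen l + 2 * l.length := by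
      intro Q hQ
      calc (Q ^ 2).totalDegree = (Q * Q).totalDegree := by rw [sq]
        _ ≤ Q.totalDegree + Q.totalDegree := MvPolynomial.totalDegree_mul Q Q
        _ ≤ (wordLen l + l.length) + (wordLen l + l.length) := add_le_add hQ hQ
        _ = 2 * wordLen l + 2 * l.length := by ring
    refine (MvPolynomial.totalDegree_add _ _).trans (max_le ((MvPolynomial.totalDegree_add
      _ _).trans (max_le ((MvPolynomial.totalDegree_add _ _).trans
      (max_le (hsq P0 h0) (hsq P1 h1))) (hsq P2 h2))) (hsq P3 h3))
  · intro α β γ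
    rw [(hasDerivAt_qWord l β γ α).deriv]
    have hn : ‖qD l α β γ‖ ^ 2 = normSq (qD l α β γ) := by
      rw [sq, ← Quaternion.normSq_eq_norm_mul_self]
    rw [hn, Quaternion.normSq_def']
    have hv : ![Real.cos α, Real.sin α, Real.cos β, Real.sin β, Real.cos γ, Real.sin γ] =
        trigVec α β γ := rfl
    rw [hv, e0' α β γ, e1' α β γ, e2' α β γ, e3' α β γ]
    simp [sq]
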